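/- arXiv:1106.4646 — 2 statements merged into one kernel-verified Lean document; each statement's English description precedes it below -/
import Mathlib

section
/- Let λ > 1 be real and let A : ℝ² → ℝ² be the linear map A(x,y) = (λ·x, λ⁻¹·y). If L is an additive subgroup of ℝ² which is discrete (there is ε > 0 such that the only element of L with norm less than ε is 0) and satisfies A(L) = L, then L contains no nonzero vector of the form (x, 0) and no nonzero vector of the form (0, y). (The nonzero axis vectors are exactly the nonzero isotropic vectors of the Minkowskian form preserved by the hyperbolic rotation A.) -/
/-- let `λ > 1` and let `A(x,y) = (λx, λ⁻¹y)` be the corresponding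
hyperbolic rotation of the Minkowskian plane. If `L` is a discrete additive
subgroup of `ℝ²` with `A(L) = L`, then `L` contains no nonzero isotropic vector,
i.e. no nonzero vector of the form `(x,0)` or `(0,y)`. -/
theorem no_isotropic_vector_in_invariant_discrete_lattice
    (lam : ℝ) (hlam : 1 < lam) (L : AddSubgroup (ℝ × ℝ))
    (hdisc : ∃ ε > 0, ∀ v ∈ L, ‖v‖ < ε → v = 0)
    (hinv : ∀ v : ℝ × ℝ, v ∈ L ↔ (lam * v.1, lam⁻¹ * v.2) ∈ L) :
    (∀ x : ℝ, x ≠ 0 → (x, (0 : ℝ)) ∉ L) ∧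
    (∀ y : ℝ, y ≠ 0 → ((0 : ℝ), y) ∉ L) := by
  obtain ⟨ε, hε, hsmall⟩ := hdisc
  have hlam0 : (0 : ℝ) < lam := lt_trans one_pos hlam
  have hinvlt : lam⁻¹ < 1 := inv_lt_one_of_one_lt₀ hlam
  have hinv0 : (0 : ℝ) < lam⁻¹ := inv_pos.mpr hlam0
  constructor
  · intro x hx hxL
    have key : ∀ n : ℕ, ((lam⁻¹)^n * x, (0 : ℝ)) ∈ L := by
      intro n
      induction n with
      | zero => simpa using hxL
      | succ n ih =>
        have := (hinv ((lam⁻¹)^(n+1) * x, 0)).mpr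
        apply this
        have : lam * ((lam⁻¹)^(n+1) * x) = (lam⁻¹)^n * x := by
          field_simp [pow_succ]
          ring_nf
          rw [mul_inv_cancel₀ hlam0.ne', one_mul]
        simp only [this]
        simpa using ih
    obtain ⟨n, hn⟩ := exists_pow_lt_of_lt_one (div_pos hε (abs_pos.mpr hx)) hinvlt
    have hmul : lam⁻¹ ^ n * |x| < ε := (lt_div_iff₀ (abs_pos.mpr hx)).mp hn
    have hnorm : ‖((lam⁻¹)^n * x, (0 : ℝ))‖ < ε := by
      simpa [Prod.norm_def, Real.norm_eq_abs, abs_mul, abs_pow,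
        abs_of_pos hinv0, abs_of_pos hlam0, hε] using hmul
    have := hsmall _ (key n) hnorm
    have hcoord : (lam⁻¹)^n * x = 0 := by
      have := congrArg Prod.fst this
      simpa using this
    exact hx (by
      rcases mul_eq_zero.mp hcoord with h | h
      · exact absurd h (pow_ne_zero n (ne_of_gt hinv0))
      · exact h)
  · intro y hy hyL
    have key : ∀ n : ℕ, ((0 : ℝ), (lam⁻¹)^n * y) ∈ L := by
      intro n
      induction n with
      | zero => simpa using hyL
      | succ n ih =>
        have h1 := (hinv (0, (lam⁻¹)^n * y)).mp ih
        have h0 : (lam * (0:ℝ), lam⁻¹ * ((lam⁻¹)^n * y)) = ((0:ℝ), (lam⁻¹)^(n+1) * y) :=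
          Prod.ext (by simp) (by rw [pow_succ]; ring)
        rw [← h0]; exact h1
    obtain ⟨n, hn⟩ := exists_pow_lt_of_lt_one (div_pos hε (abs_pos.mpr hy)) hinvlt
    have hmul : lam⁻¹ ^ n * |y| < ε := (lt_div_iff₀ (abs_pos.mpr hy)).mp hn
    have hnorm : ‖((0 : ℝ), (lam⁻¹)^n * y)‖ < ε := by
      simpa [Prod.norm_def, Real.norm_eq_abs, abs_mul, abs_pow,
        abs_of_pos hinv0, abs_of_pos hlam0, hε] using hmul
    have := hsmall _ (key n) hnorm
    have hcoord : (lam⁻¹)^n * y = 0 := by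
      have := congrArg Prod.snd this
      simpa using this
    exact hy (by
      rcases mul_eq_zero.mp hcoord with h | h
      · exact absurd h (pow_ne_zero n (ne_of_gt hinv0))
      · exact h)
end

section
/- Let N, p, q be real numbers with N > 2 and q ≠ 0, and let a, b be nonzero real numbers. If -b/a = (N - 2p - √(N²-4))/(2q) and a/b = (N - 2p + √(N²-4))/(2q), then q² = p·(N - p) - 1. (This is the arithmetic criterion for a Sol lattice to admit the point group C₄.) -/
/-- if `N > 2`, `q ≠ 0`, `a, b ≠ 0`,
`-b/a = (N - 2p - √(N²-4))/(2q)` and `a/b = (N - 2p + √(N²-4))/(2q)`,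
then `q² = p(N-p) - 1` (the criterion for point group `C₄`). -/
theorem c4_point_group_criterion (N p q a b : ℝ) (hN : 2 < N) (hq : q ≠ 0)
    (ha : a ≠ 0) (hb : b ≠ 0)
    (h1 : -b / a = (N - 2 * p - Real.sqrt (N ^ 2 - 4)) / (2 * q))
    (h2 : a / b = (N - 2 * p + Real.sqrt (N ^ 2 - 4)) / (2 * q)) :
    q ^ 2 = p * (N - p) - 1 := by
  have hs : Real.sqrt (N ^ 2 - 4) ^ 2 = N ^ 2 - 4 := by
    rw [Real.sq_sqrt]; nlinarith
  have key : (-b / a) * (a / b) = -1 := by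
    field_simp
  rw [h1, h2] at key
  field_simp at key
  nlinarith [key, hs]
end
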